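/- (Simulator fidelity bound) Consider a finite MDP with reward r : S × A → [0, R_max], transition kernel P, discount γ ∈ [0,1), and an approximate model (r̂, P̂) with max_{s,a} |r̂(s,a) - r(s,a)| ≤ ε_R and max_{s,a} d_TV(P̂(s,a), P(s,a)) ≤ ε_P. Then for any stationary policy π, the value functions satisfy ‖V̂^π - V^π‖_∞ ≤ ε_R/(1-γ) + γ ε_P R_max/(1-γ)². -/

import Mathlib

open Finset

/-- Simulator fidelity bound: if the approximate model's rewards are `ε_R`-accurate
and its transitions are `ε_P`-accurate in total variation, then the value functions of
any stationary policy under the true and approximate models are uniformly close. -/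
theorem simulator_fidelity_bound {S A : Type*} [Fintype S] [Fintype A]
    (r rhat : S → A → ℝ) (P Phat : S → A → S → ℝ) (π : S → A)
    (γ Rmax εR εP : ℝ) (V Vhat : S → ℝ)
    (hγ : 0 ≤ γ) (hγ1 : γ < 1) (hR : 0 ≤ Rmax)
    (hr : ∀ s a, 0 ≤ r s a ∧ r s a ≤ Rmax)
    (hrhat : ∀ s a, 0 ≤ rhat s a ∧ rhat s a ≤ Rmax)
    (hP : ∀ s a, (∀ s', 0 ≤ P s a s') ∧ ∑ s', P s a s' = 1)
    (hPhat : ∀ s a, (∀ s', 0 ≤ Phat s a s') ∧ ∑ s', Phat s a s' = 1)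
    (hεR : ∀ s a, |rhat s a - r s a| ≤ εR)
    (hεP : ∀ s a, (1 / 2) * ∑ s', |Phat s a s' - P s a s'| ≤ εP)
    (hV : ∀ s, V s = r s (π s) + γ * ∑ s', P s (π s) s' * V s')
    (hVhat : ∀ s, Vhat s = rhat s (π s) + γ * ∑ s', Phat s (π s) s' * Vhat s')
    (hVbd : ∀ s, 0 ≤ V s ∧ V s ≤ Rmax / (1 - γ))
    (hVhatbd : ∀ s, 0 ≤ Vhat s ∧ Vhat s ≤ Rmax / (1 - γ)) :
    ∀ s, |Vhat s - V s| ≤ εR / (1 - γ) + γ * εP * Rmax / (1 - γ) ^ 2 := by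
  intro s0
  have hS : Nonempty S := ⟨s0⟩
  have hne : (Finset.univ : Finset S).Nonempty := Finset.univ_nonempty
  have hγ' : 0 < 1 - γ := by linarith
  set Vmax := Rmax / (1 - γ) with hVmaxdef
  have hVmax : 0 ≤ Vmax := div_nonneg hR hγ'.le
  set M := Finset.univ.sup' hne (fun s => |Vhat s - V s|) with hMdef
  have hMle : ∀ s : S, |Vhat s - V s| ≤ M := fun s => Finset.le_sup' (fun s => |Vhat s - V s|) (mem_univ s)
  -- key pointwise recursion bound
  have key : ∀ s : S, |Vhat s - V s| ≤ εR + γ * (εP * Vmax) + γ * M := by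
    intro s
    set a := π s with ha
    have hsum : ∑ s', P s a s' = 1 := (hP s a).2
    have hsumhat : ∑ s', Phat s a s' = 1 := (hPhat s a).2
    have hdecomp : Vhat s - V s =
        (rhat s a - r s a) + γ * (∑ s', (Phat s a s' - P s a s') * (V s' - Vmax / 2))
          + γ * (∑ s', Phat s a s' * (Vhat s' - V s')) := by
      rw [hV s, hVhat s]
      have e1 : ∑ s', (Phat s a s' - P s a s') * (V s' - Vmax / 2)
          = (∑ s', Phat s a s' * V s') - (∑ s', P s a s' * V s')
            - (Vmax / 2) * ((∑ s', Phat s a s') - (∑ s', P s a s')) := by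
        have hx : ∀ x : S, (Phat s a x - P s a x) * (V x - Vmax / 2)
            = (Phat s a x * V x - P s a x * V x)
              - (Vmax / 2 * Phat s a x - Vmax / 2 * P s a x) := fun x => by ring
        simp only [hx, Finset.sum_sub_distrib, ← Finset.mul_sum]
        ring
      have e2 : ∑ s', Phat s a s' * (Vhat s' - V s')
          = (∑ s', Phat s a s' * Vhat s') - (∑ s', Phat s a s' * V s') := by
        rw [← Finset.sum_sub_distrib]
        exact Finset.sum_congr rfl fun x _ => by ring
      rw [e1, e2, hsum, hsumhat]
      ring
    rw [hdecomp]
    have h1 : |rhat s a - r s a| ≤ εR := hεR s a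
    have h2 : |∑ s', (Phat s a s' - P s a s') * (V s' - Vmax / 2)| ≤ εP * Vmax := by
      calc |∑ s', (Phat s a s' - P s a s') * (V s' - Vmax / 2)|
          ≤ ∑ s', |(Phat s a s' - P s a s') * (V s' - Vmax / 2)| :=
            Finset.abs_sum_le_sum_abs _ _
        _ ≤ ∑ s', |Phat s a s' - P s a s'| * (Vmax / 2) := by
            apply Finset.sum_le_sum
            intro x _
            rw [abs_mul]
            apply mul_le_mul_of_nonneg_left _ (abs_nonneg _)
            have := (hVbd x).1
            have := (hVbd x).2
            rw [abs_le]
            constructor <;> [linarith; linarith]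
        _ = (Vmax / 2) * ∑ s', |Phat s a s' - P s a s'| := by
            rw [← Finset.sum_mul]; ring
        _ ≤ εP * Vmax := by
            have h := hεP s a
            nlinarith [Finset.sum_nonneg (fun x (_ : x ∈ Finset.univ) =>
              abs_nonneg (Phat s a x - P s a x))]
    have h3 : |∑ s', Phat s a s' * (Vhat s' - V s')| ≤ M := by
      calc |∑ s', Phat s a s' * (Vhat s' - V s')|
          ≤ ∑ s', |Phat s a s' * (Vhat s' - V s')| := Finset.abs_sum_le_sum_abs _ _
        _ ≤ ∑ s', Phat s a s' * M := by
            apply Finset.sum_le_sum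
            intro x _
            rw [abs_mul, abs_of_nonneg ((hPhat s a).1 x)]
            exact mul_le_mul_of_nonneg_left (hMle x) ((hPhat s a).1 x)
        _ = M := by rw [← Finset.sum_mul, hsumhat, one_mul]
    calc |(rhat s a - r s a) + γ * (∑ s', (Phat s a s' - P s a s') * (V s' - Vmax / 2))
            + γ * (∑ s', Phat s a s' * (Vhat s' - V s'))|
        ≤ |rhat s a - r s a| + |γ * (∑ s', (Phat s a s' - P s a s') * (V s' - Vmax / 2))|
            + |γ * (∑ s', Phat s a s' * (Vhat s' - V s'))| := abs_add_three _ _ _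
      _ ≤ εR + γ * (εP * Vmax) + γ * M := by
          rw [abs_mul, abs_mul, abs_of_nonneg hγ]
          have := mul_le_mul_of_nonneg_left h2 hγ
          have := mul_le_mul_of_nonneg_left h3 hγ
          linarith
  -- apply at the maximizer
  obtain ⟨smax, _, hsmax⟩ := Finset.exists_mem_eq_sup' hne (fun s => |Vhat s - V s|)
  have hMrec : M ≤ εR + γ * (εP * Vmax) + γ * M := by
    have h := key smax; rw [← hsmax] at h; exact h
  have hMbd : M ≤ (εR + γ * (εP * Vmax)) / (1 - γ) := by
    rw [le_div_iff₀ hγ']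
    nlinarith
  have hfinal : (εR + γ * (εP * Vmax)) / (1 - γ)
      = εR / (1 - γ) + γ * εP * Rmax / (1 - γ) ^ 2 := by
    rw [hVmaxdef]
    field_simp
  calc |Vhat s0 - V s0| ≤ M := hMle s0
    _ ≤ (εR + γ * (εP * Vmax)) / (1 - γ) := hMbd
    _ = _ := hfinal
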